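/- For every integer N ≥ 2, the sum of the multiplicities over all compositions of N vanishes: ∑_{I composition of N} m_I = 0. (Moreover m_{(N)} = 1 for all N ≥ 1.) -/

import Mathlib

open Finset

/-- The multiplicity `m_I ∈ ℚ` of a composition `I = (I_1, …, I_r)` of `N = I_1 + ⋯ + I_r`:
`m_I = -(-1)^r · N! · (N-1)! · ∏_{t=1}^r 1/(I_t!(I_t-1)!) · ∏_{t=1}^{r-1} 1/(I_t+I_{t+1})`. -/
noncomputable def mult (I : List ℕ) : ℚ :=
  -(-1 : ℚ) ^ I.length * (Nat.factorial I.sum : ℚ) * (Nat.factorial (I.sum - 1) : ℚ)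
    * (I.map fun a => ((Nat.factorial a : ℚ) * (Nat.factorial (a - 1) : ℚ))⁻¹).prod
    * ((I.zip I.tail).map fun p => ((p.1 + p.2 : ℕ) : ℚ)⁻¹).prod

/-- per-entry factorial weight -/
noncomputable def fp (a : ℕ) : ℚ := ((Nat.factorial a : ℚ) * (Nat.factorial (a - 1) : ℚ))⁻¹

/-- the cross-term product, defined recursively -/
noncomputable def cr : List ℕ → ℚ
  | [] => 1
  | [_] => 1
  | (a :: b :: t) => ((a + b : ℕ) : ℚ)⁻¹ * cr (b :: t)

lemma cr_eq (l : List ℕ) :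
    ((l.zip l.tail).map fun p => ((p.1 + p.2 : ℕ) : ℚ)⁻¹).prod = cr l := by
  match l with
  | [] => simp [cr]
  | [a] => simp [cr]
  | (a :: b :: t) =>
    have := cr_eq (b :: t)
    simp only [cr, List.tail, List.zip_cons_cons, List.map_cons, List.prod_cons] at *
    rw [this]

/-- the composition weight without the global factorials -/
noncomputable def w (l : List ℕ) : ℚ :=
  -(-1 : ℚ) ^ l.length * (l.map fp).prod * cr l

lemma mult_eq (l : List ℕ) :
    mult l = (Nat.factorial l.sum : ℚ) * (Nat.factorial (l.sum - 1) : ℚ) * w l := by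
  have hfp : (fun a => ((Nat.factorial a : ℚ) * (Nat.factorial (a - 1) : ℚ))⁻¹) = fp := rfl
  rw [mult, w, cr_eq, hfp]
  ring

lemma w_single (a : ℕ) : w [a] = fp a := by
  simp [w, cr]

lemma cr_append (l : List ℕ) (a : ℕ) (hl : l ≠ []) :
    cr (l ++ [a]) = cr l * ((l.getLastD 0 + a : ℕ) : ℚ)⁻¹ := by
  match l with
  | [] => exact absurd rfl hl
  | [x] => simp [cr]
  | (x :: y :: t) =>
    have ih := cr_append (y :: t) a (by simp)
    show ((x + y : ℕ) : ℚ)⁻¹ * cr ((y :: t) ++ [a])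
      = ((x + y : ℕ) : ℚ)⁻¹ * cr (y :: t) * (((x :: y :: t).getLastD 0 + a : ℕ) : ℚ)⁻¹
    rw [ih]
    simp only [List.getLastD_cons]
    ring

lemma w_append (l : List ℕ) (a : ℕ) (hl : l ≠ []) :
    w (l ++ [a]) = -w l * fp a * ((l.getLastD 0 + a : ℕ) : ℚ)⁻¹ := by
  rw [w, w, cr_append l a hl]
  simp only [List.length_append, List.map_append, List.prod_append, List.length_singleton,
    List.map_singleton, List.prod_singleton, pow_succ]
  ring

/-- all compositions of `n` as a `Finset` of lists -/
def comps : ℕ → Finset (List ℕ)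
  | 0 => {[]}
  | (n + 1) =>
    (Finset.range (n + 1)).biUnion (fun j => (comps (n - j)).image (fun l => l ++ [j + 1]))
decreasing_by exact Nat.lt_succ_of_le (Nat.sub_le n j)

lemma sum_comps_succ (f : List ℕ → ℚ) (n : ℕ) :
    ∑ l ∈ comps (n + 1), f l
      = ∑ j ∈ Finset.range (n + 1), ∑ l ∈ comps (n - j), f (l ++ [j + 1]) := by
  rw [comps]
  rw [Finset.sum_biUnion]
  · refine Finset.sum_congr rfl fun j _ => ?_
    rw [Finset.sum_image]
    intro x _ y _ hxy
    simpa [← List.concat_eq_append, List.concat_inj] using hxy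
  · intro j₁ _ j₂ _ hne
    simp only [Finset.disjoint_left, Finset.mem_image]
    rintro l ⟨l₁, _, rfl⟩ ⟨l₂, _, h⟩
    rw [← List.concat_eq_append, ← List.concat_eq_append, List.concat_inj] at h
    omega

lemma mem_comps_of (l : List ℕ) (hpos : ∀ x ∈ l, 0 < x) : l ∈ comps l.sum := by
  induction l using List.reverseRecOn with
  | nil => simp [comps]
  | append_singleton l a ih =>
    have ha : 0 < a := hpos a (by simp)
    have hl : l ∈ comps l.sum := ih (fun x hx => hpos x (by simp [hx]))
    obtain ⟨j, rfl⟩ : ∃ j, a = j + 1 := ⟨a - 1, by omega⟩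
    have hsum : (l ++ [j + 1]).sum = (l.sum + j) + 1 := by simp; omega
    rw [hsum, comps]
    apply Finset.mem_biUnion.2
    refine ⟨j, Finset.mem_range.2 (by omega), ?_⟩
    apply Finset.mem_image.2
    exact ⟨l, by simpa using hl, rfl⟩

lemma of_mem_comps : ∀ N : ℕ, ∀ l ∈ comps N, l.sum = N ∧ ∀ x ∈ l, 0 < x := by
  intro N
  induction N using Nat.strong_induction_on with
  | _ N ih =>
    match N with
    | 0 => intro l hl; simp [comps] at hl; simp [hl]
    | (n + 1) =>
      intro l hl
      rw [comps] at hl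
      obtain ⟨j, hj, hl⟩ := Finset.mem_biUnion.1 hl
      obtain ⟨l', hl', rfl⟩ := Finset.mem_image.1 hl
      have hj' : j ≤ n := Nat.lt_succ_iff.1 (Finset.mem_range.1 hj)
      obtain ⟨hsum, hpos⟩ := ih (n - j) (Nat.lt_succ_of_le (Nat.sub_le n j)) l' hl'
      constructor
      · simp [hsum]; omega
      · intro x hx
        rcases List.mem_append.1 hx with h | h
        · exact hpos x h
        · simp at h; omega

lemma sum_composition_eq (N : ℕ) (f : List ℕ → ℚ) :
    ∑ I : Composition N, f I.blocks = ∑ l ∈ comps N, f l := by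
  refine Finset.sum_bij' (fun I _ => I.blocks)
    (fun l hl => ⟨l, fun hi => (of_mem_comps N l hl).2 _ hi, (of_mem_comps N l hl).1⟩)
    ?_ ?_ ?_ ?_ ?_
  · intro I _
    have := mem_comps_of I.blocks (fun x hx => I.blocks_pos hx)
    rwa [I.blocks_sum] at this
  · intro l hl; exact Finset.mem_univ _
  · intro I _; rfl
  · intro l hl; rfl
  · intro I _; rfl

lemma fact_ne (m : ℕ) : ((Nat.factorial m : ℕ) : ℚ) ≠ 0 :=
  Nat.cast_ne_zero.2 (Nat.factorial_ne_zero m)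

/-- the key binomial identity `∑_{j=0}^n (-1)^j C(n,j)/(j+k+1) = n!k!/(n+k+1)!` -/
lemma key : ∀ n : ℕ, ∀ k : ℕ,
    ∑ j ∈ Finset.range (n + 1), (-1 : ℚ) ^ j * (n.choose j : ℚ) / ((j : ℚ) + (k : ℚ) + 1)
      = (Nat.factorial n : ℚ) * (Nat.factorial k : ℚ) / (Nat.factorial (n + k + 1) : ℚ) := by
  intro n
  induction n with
  | zero =>
    intro k
    rw [Finset.sum_range_one]
    have h : (0 : ℕ) + k + 1 = k + 1 := by omega
    rw [h, Nat.factorial_succ]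
    have hk : ((k : ℚ) + 1) ≠ 0 := by positivity
    have hf := fact_ne k
    push_cast
    field_simp
    simp
  | succ n ih =>
    intro k
    rw [Finset.sum_range_succ'
      (fun j => (-1 : ℚ) ^ j * ((n + 1).choose j : ℚ) / ((j : ℚ) + (k : ℚ) + 1)) (n + 1)]
    have hsplit : ∀ i ∈ Finset.range (n + 1),
        (-1 : ℚ) ^ (i + 1) * (((n + 1).choose (i + 1) : ℕ) : ℚ) / (((i + 1 : ℕ) : ℚ) + (k : ℚ) + 1)
          = (-1 : ℚ) ^ (i + 1) * ((n.choose (i + 1) : ℕ) : ℚ) / (((i + 1 : ℕ) : ℚ) + (k : ℚ) + 1)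
            - (-1 : ℚ) ^ i * ((n.choose i : ℕ) : ℚ) / ((i : ℚ) + ((k : ℚ) + 1) + 1) := by
      intro i _
      rw [Nat.choose_succ_succ]
      have hD : ((i : ℚ) + 1 + k + 1) ≠ 0 := by positivity
      push_cast
      field_simp
      ring
    rw [Finset.sum_congr rfl hsplit, Finset.sum_sub_distrib]
    have e2 : (∑ i ∈ Finset.range (n + 1),
          (-1 : ℚ) ^ (i + 1) * ((n.choose (i + 1) : ℕ) : ℚ) / (((i + 1 : ℕ) : ℚ) + (k : ℚ) + 1))
        = (∑ j ∈ Finset.range (n + 1), (-1 : ℚ) ^ j * (n.choose j : ℚ) / ((j : ℚ) + (k : ℚ) + 1))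
          - 1 / ((k : ℚ) + 1) := by
      have a1 := Finset.sum_range_succ'
        (fun j => (-1 : ℚ) ^ j * (n.choose j : ℚ) / ((j : ℚ) + (k : ℚ) + 1)) (n + 1)
      have a2 := Finset.sum_range_succ
        (fun j => (-1 : ℚ) ^ j * (n.choose j : ℚ) / ((j : ℚ) + (k : ℚ) + 1)) (n + 1)
      rw [a2, Nat.choose_succ_self] at a1
      simp only [Nat.cast_zero, Nat.cast_ofNat, pow_zero, Nat.choose_zero_right, Nat.cast_one,
        one_mul, zero_add, mul_zero, zero_div, add_zero] at a1 ⊢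
      rw [a1]
      ring
    rw [e2]
    have hsub : ∀ i ∈ Finset.range (n + 1),
        (-1 : ℚ) ^ i * ((n.choose i : ℕ) : ℚ) / ((i : ℚ) + ((k : ℚ) + 1) + 1)
          = (-1 : ℚ) ^ i * ((n.choose i : ℕ) : ℚ) / ((i : ℚ) + ((k + 1 : ℕ) : ℚ) + 1) := by
      intro i _; push_cast; ring_nf
    rw [Finset.sum_congr rfl hsub, ih k, ih (k + 1)]
    have e3 : n + (k + 1) + 1 = (n + k + 1) + 1 := by omega
    have e4 : (n + 1) + k + 1 = (n + k + 1) + 1 := by omega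
    rw [e3, e4, Nat.factorial_succ (n + k + 1), Nat.factorial_succ n, Nat.factorial_succ k]
    have h1 := fact_ne n
    have h2 := fact_ne k
    have h3 := fact_ne (n + k + 1)
    have h4 : ((k : ℚ) + 1) ≠ 0 := by positivity
    have h5 : ((n : ℚ) + k + 1 + 1) ≠ 0 := by positivity
    push_cast
    field_simp
    simp only [Nat.choose_zero_right, Nat.cast_one]
    ring

lemma choose_cast_eq (n j : ℕ) (hj : j ≤ n) :
    ((n.choose j : ℕ) : ℚ) * (Nat.factorial j : ℚ) * (Nat.factorial (n - j) : ℚ)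
      = (Nat.factorial n : ℚ) := by
  exact_mod_cast congrArg (fun m : ℕ => (m : ℚ))
    (Nat.choose_mul_factorial_mul_factorial hj)

/-- the weighted sum over compositions of `M`:
`∑_{|I|=M} w(I)/(last(I)+k) = (-1)^{M+1} k! / (M! (M+k)!)` -/
lemma Gsum : ∀ M : ℕ, ∀ k : ℕ, 1 ≤ M →
    (∑ l ∈ comps M, w l * ((l.getLastD 0 + k : ℕ) : ℚ)⁻¹)
      = (-1 : ℚ) ^ (M + 1) * (Nat.factorial k : ℚ)
          / ((Nat.factorial M : ℚ) * (Nat.factorial (M + k) : ℚ)) := by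
  intro M
  induction M using Nat.strong_induction_on with
  | _ M ih =>
    match M with
    | 0 => intro k h; omega
    | (n + 1) =>
      intro k _
      rw [sum_comps_succ (fun l => w l * ((l.getLastD 0 + k : ℕ) : ℚ)⁻¹) n]
      have hinner : ∀ j ∈ Finset.range (n + 1),
          (∑ l ∈ comps (n - j), w (l ++ [j + 1]) * (((l ++ [j + 1]).getLastD 0 + k : ℕ) : ℚ)⁻¹)
            = (-1 : ℚ) ^ (n - j) * (n.choose j : ℚ)
                / ((Nat.factorial n : ℚ) * (Nat.factorial (n + 1) : ℚ) * ((j + k + 1 : ℕ) : ℚ)) := by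
        intro j hj
        have hj' : j ≤ n := Nat.lt_succ_iff.1 (Finset.mem_range.1 hj)
        by_cases hc : j = n
        · subst hc
          rw [Nat.sub_self, show comps 0 = {[]} by rw [comps], Finset.sum_singleton,
            List.getLastD_concat, List.nil_append, w_single]
          simp only [fp, Nat.add_sub_cancel, Nat.choose_self, Nat.cast_one, Nat.sub_self, pow_zero]
          have e1 : ((j + 1 + k : ℕ) : ℚ) = (j : ℚ) + k + 1 := by push_cast; ring
          have e2 : ((j + k + 1 : ℕ) : ℚ) = (j : ℚ) + k + 1 := by push_cast; ring
          rw [e1, e2]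
          have h1 := fact_ne j
          have h2 := fact_ne (j + 1)
          have h3 : ((j : ℚ) + k + 1) ≠ 0 := by positivity
          field_simp
        · have h1 : 1 ≤ n - j := by omega
          have cstep : ∀ l ∈ comps (n - j),
              w (l ++ [j + 1]) * (((l ++ [j + 1]).getLastD 0 + k : ℕ) : ℚ)⁻¹
                = (-(fp (j + 1)) * ((j + 1 + k : ℕ) : ℚ)⁻¹)
                    * (w l * ((l.getLastD 0 + (j + 1) : ℕ) : ℚ)⁻¹) := by
            intro l hl
            have hl' : l ≠ [] := by
              intro h
              have := (of_mem_comps _ _ hl).1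
              rw [h] at this
              simp at this
              omega
            rw [w_append l (j + 1) hl', List.getLastD_concat]
            ring
          rw [Finset.sum_congr rfl cstep, ← Finset.mul_sum,
            ih (n - j) (by omega) (j + 1) h1]
          have e0 : (n - j) + (j + 1) = n + 1 := by omega
          rw [e0]
          simp only [fp, Nat.add_sub_cancel]
          have e1 : ((j + 1 + k : ℕ) : ℚ) = (j : ℚ) + k + 1 := by push_cast; ring
          have e2 : ((j + k + 1 : ℕ) : ℚ) = (j : ℚ) + k + 1 := by push_cast; ring
          rw [e1, e2, ← choose_cast_eq n j hj']
          have h1 := fact_ne j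
          have h2 := fact_ne (j + 1)
          have h3 := fact_ne (n - j)
          have h4 := fact_ne (n + 1)
          have h5 : ((j : ℚ) + k + 1) ≠ 0 := by positivity
          have h6 : ((n.choose j : ℕ) : ℚ) ≠ 0 :=
            Nat.cast_ne_zero.2 (Nat.choose_pos hj').ne'
          field_simp
          ring
      rw [Finset.sum_congr rfl hinner]
      have hterm : ∀ j ∈ Finset.range (n + 1),
          (-1 : ℚ) ^ (n - j) * (n.choose j : ℚ)
              / ((Nat.factorial n : ℚ) * (Nat.factorial (n + 1) : ℚ) * ((j + k + 1 : ℕ) : ℚ))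
            = ((-1 : ℚ) ^ n / ((Nat.factorial n : ℚ) * (Nat.factorial (n + 1) : ℚ)))
                * ((-1 : ℚ) ^ j * (n.choose j : ℚ) / ((j : ℚ) + (k : ℚ) + 1)) := by
        intro j hj
        have hj' : j ≤ n := Nat.lt_succ_iff.1 (Finset.mem_range.1 hj)
        have hpow : ((-1 : ℚ)) ^ n = (-1 : ℚ) ^ (n - j) * (-1 : ℚ) ^ j := by
          rw [← pow_add, Nat.sub_add_cancel hj']
        have e2 : ((j + k + 1 : ℕ) : ℚ) = (j : ℚ) + k + 1 := by push_cast; ring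
        rw [e2, hpow]
        have h1 := fact_ne n
        have h2 := fact_ne (n + 1)
        have h5 : ((j : ℚ) + k + 1) ≠ 0 := by positivity
        field_simp
        have hbb : ((-1 : ℚ)) ^ j * (-1 : ℚ) ^ j = 1 := by
          rw [← pow_add]; exact Even.neg_one_pow ⟨j, rfl⟩
        linear_combination (-(n.choose j : ℚ)) * hbb
      rw [Finset.sum_congr rfl hterm, ← Finset.mul_sum, key n k]
      have e4 : (n + 1) + k = n + k + 1 := by omega
      rw [e4]
      have h1 := fact_ne n
      have h2 := fact_ne (n + 1)
      have h3 := fact_ne k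
      have h4 := fact_ne (n + k + 1)
      field_simp
      ring

theorem sum_mult_eq_zero :
    (∀ N : ℕ, 2 ≤ N → ∑ I : Composition N, mult I.blocks = 0)
      ∧ (∀ N : ℕ, 1 ≤ N → mult [N] = 1) := by
  constructor
  · intro N hN
    obtain ⟨n, rfl⟩ : ∃ n, N = n + 1 := ⟨N - 1, by omega⟩
    have hn : 1 ≤ n := by omega
    rw [sum_composition_eq]
    have hterm : ∀ l ∈ comps (n + 1),
        mult l = (Nat.factorial (n + 1) : ℚ) * (Nat.factorial n : ℚ) * w l := by
      intro l hl
      rw [mult_eq, (of_mem_comps _ _ hl).1]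
      norm_num
    rw [Finset.sum_congr rfl hterm, ← Finset.mul_sum]
    have hzero : ∑ l ∈ comps (n + 1), w l = 0 := by
      rw [sum_comps_succ w n]
      have hinner : ∀ j ∈ Finset.range (n + 1),
          (∑ l ∈ comps (n - j), w (l ++ [j + 1]))
            = (-1 : ℚ) ^ (n - j) * (n.choose j : ℚ)
                / ((Nat.factorial n : ℚ) * (Nat.factorial (n + 1) : ℚ)) := by
        intro j hj
        have hj' : j ≤ n := Nat.lt_succ_iff.1 (Finset.mem_range.1 hj)
        by_cases hc : j = n
        · subst hc
          rw [Nat.sub_self, show comps 0 = {[]} by rw [comps], Finset.sum_singleton]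
          simp only [List.nil_append, w_single]
          simp only [fp, Nat.add_sub_cancel, Nat.choose_self, Nat.cast_one, Nat.sub_self, pow_zero]
          have h1 := fact_ne j
          have h2 := fact_ne (j + 1)
          field_simp
        · have h1 : 1 ≤ n - j := by omega
          have cstep : ∀ l ∈ comps (n - j),
              w (l ++ [j + 1])
                = (-(fp (j + 1))) * (w l * ((l.getLastD 0 + (j + 1) : ℕ) : ℚ)⁻¹) := by
            intro l hl
            have hl' : l ≠ [] := by
              intro h
              have := (of_mem_comps _ _ hl).1
              rw [h] at this
              simp at this
              omega
            rw [w_append l (j + 1) hl']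
            ring
          rw [Finset.sum_congr rfl cstep, ← Finset.mul_sum, Gsum (n - j) (j + 1) h1]
          have e0 : (n - j) + (j + 1) = n + 1 := by omega
          rw [e0]
          simp only [fp, Nat.add_sub_cancel]
          rw [← choose_cast_eq n j hj']
          have h1 := fact_ne j
          have h2 := fact_ne (j + 1)
          have h3 := fact_ne (n - j)
          have h4 := fact_ne (n + 1)
          have h6 : ((n.choose j : ℕ) : ℚ) ≠ 0 :=
            Nat.cast_ne_zero.2 (Nat.choose_pos hj').ne'
          field_simp
          ring
      rw [Finset.sum_congr rfl hinner]
      have hterm2 : ∀ j ∈ Finset.range (n + 1),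
          (-1 : ℚ) ^ (n - j) * (n.choose j : ℚ)
              / ((Nat.factorial n : ℚ) * (Nat.factorial (n + 1) : ℚ))
            = ((-1 : ℚ) ^ n / ((Nat.factorial n : ℚ) * (Nat.factorial (n + 1) : ℚ)))
                * ((-1 : ℚ) ^ j * (n.choose j : ℚ)) := by
        intro j hj
        have hj' : j ≤ n := Nat.lt_succ_iff.1 (Finset.mem_range.1 hj)
        have hpow : ((-1 : ℚ)) ^ n = (-1 : ℚ) ^ (n - j) * (-1 : ℚ) ^ j := by
          rw [← pow_add, Nat.sub_add_cancel hj']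
        rw [hpow]
        have h1 := fact_ne n
        have h2 := fact_ne (n + 1)
        field_simp
        have hbb : ((-1 : ℚ)) ^ j * (-1 : ℚ) ^ j = 1 := by
          rw [← pow_add]; exact Even.neg_one_pow ⟨j, rfl⟩
        linear_combination (-(n.choose j : ℚ)) * hbb
      rw [Finset.sum_congr rfl hterm2, ← Finset.mul_sum]
      have halt : ∑ j ∈ Finset.range (n + 1), (-1 : ℚ) ^ j * (n.choose j : ℚ) = 0 := by
        have h := Int.alternating_sum_range_choose_of_ne (show n ≠ 0 by omega)
        have : ((∑ i ∈ Finset.range (n + 1), (-1 : ℤ) ^ i * (n.choose i : ℤ) : ℤ) : ℚ) = 0 := by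
          rw [h]; rfl
        push_cast at this
        exact this
      rw [halt, mul_zero]
    rw [hzero, mul_zero]
  · intro N hN
    rw [mult]
    simp only [List.length_singleton, List.sum_singleton, List.map_singleton,
      List.prod_singleton, pow_one, List.tail, List.zip_nil_right, List.map_nil,
      List.prod_nil, neg_neg, one_mul, mul_one]
    have h1 := fact_ne N
    have h2 := fact_ne (N - 1)
    field_simp
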